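/- Let p be an odd prime, p ≡ 3 (mod 4), p ≥ 11, and S the set of nonzero squares in F_p. If f ∈ F_p[X] has degree (p+1)/4 and satisfies f(a)^2 = a for all a ∈ S, then f(X) = ±X^((p+1)/4). -/

import Mathlib

open Polynomial

/-- For `p ≡ 3 (mod 4)`, `p ≥ 11`, the only degree-`(p+1)/4` polynomials
computing square roots on the nonzero squares are `± X^((p+1)/4)`. -/
theorem stmt_7 (p : ℕ) [Fact p.Prime] (hp : p % 4 = 3) (hp11 : 11 ≤ p)
    (f : Polynomial (ZMod p)) (hdeg : f.natDegree = (p + 1) / 4)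
    (hf : ∀ a : ZMod p, a ≠ 0 → IsSquare a → (f.eval a) ^ 2 = a) :
    f = X ^ ((p + 1) / 4) ∨ f = -(X ^ ((p + 1) / 4)) := by
  have hprime : p.Prime := Fact.out
  obtain ⟨n, hn4⟩ : ∃ n, p + 1 = 4 * n := ⟨(p+1)/4, by omega⟩
  have hdeg' : f.natDegree = n := by rw [hdeg]; omega
  obtain ⟨e, he1, he2⟩ : ∃ e, p / 2 = e + 1 ∧ e + 2 = 2 * n := ⟨2*n-2, by omega, by omega⟩
  have hn3 : 3 ≤ n := by omega
  have hpe : 2 * e + 3 = p := by omega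
  -- basic nonvanishing
  have hf0 : f ≠ 0 := fun h => by simp [h] at hdeg'; omega
  have hdeg2 : (f ^ 2 - X).natDegree = 2 * n := by
    rw [natDegree_sub_eq_left_of_natDegree_lt] <;>
      simp [natDegree_pow, hdeg', natDegree_X] <;> omega
  have hneff : (f ^ 2 - X : (ZMod p)[X]) ≠ 0 := fun h => by
    rw [h] at hdeg2; simp at hdeg2; omega
  -- Step A : X^(e+1) - 1 divides f^2 - X
  have hcast : ((e + 1 : ℕ) : ZMod p) ≠ 0 := by
    intro h
    rw [ZMod.natCast_eq_zero_iff] at h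
    have := Nat.le_of_dvd (by omega) h
    omega
  have hmono : (X ^ (e+1) - 1 : (ZMod p)[X]).Monic := by
    simpa using monic_X_pow_sub_C (1 : ZMod p) (n := e+1) (by omega)
  have hsep : (X ^ (e+1) - 1 : (ZMod p)[X]).Separable := by
    simpa using separable_X_pow_sub_C (1 : ZMod p) hcast one_ne_zero
  have hdXp : (X ^ (e+1) - 1 : (ZMod p)[X]) ∣ X ^ p - X := by
    refine ⟨X ^ (e+2) + X, ?_⟩
    have hxp : (X : (ZMod p)[X]) ^ p = X ^ (2*e+3) := by rw [hpe]
    rw [hxp]; ring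
  have hXpne : (X ^ p - X : (ZMod p)[X]) ≠ 0 :=
    FiniteField.X_pow_card_sub_X_ne_zero _ (by omega)
  have hsplitsXp : Splits (X ^ p - X : (ZMod p)[X]) := by
    rw [splits_iff_card_roots]
    have h1 := FiniteField.roots_X_pow_card_sub_X (ZMod p)
    rw [ZMod.card] at h1
    rw [h1, FiniteField.X_pow_card_sub_X_natDegree_eq _ (show 1 < p by omega)]
    simp [ZMod.card]
  have hsplits1 : Splits (X ^ (e+1) - 1 : (ZMod p)[X]) :=
    Splits.of_dvd hsplitsXp hXpne hdXp
  have heqprod : (X ^ (e+1) - 1 : (ZMod p)[X]) =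
      ((X ^ (e+1) - 1 : (ZMod p)[X]).roots.map fun a => X - C a).prod :=
    hsplits1.eq_prod_roots_of_monic hmono
  have hsub : ∀ a ∈ (X ^ (e+1) - 1 : (ZMod p)[X]).roots, a ∈ (f ^ 2 - X).roots := by
    intro a ha
    have hne : (X ^ (e+1) - 1 : (ZMod p)[X]) ≠ 0 := hmono.ne_zero
    rw [mem_roots hne] at ha
    have haq : a ^ (e+1) = 1 := by
      have h := ha
      simp only [IsRoot, eval_sub, eval_pow, eval_X, eval_one] at h
      linear_combination h
    have ha0 : a ≠ 0 := by
      intro h; rw [h] at haq; simp at haq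
    have hsq : IsSquare a := by
      rw [ZMod.euler_criterion p ha0, he1]; exact haq
    rw [mem_roots hneff]
    simp [IsRoot, hf a ha0 hsq]
  have hle : (X ^ (e+1) - 1 : (ZMod p)[X]).roots ≤ (f ^ 2 - X).roots :=
    (Multiset.le_iff_subset (nodup_roots hsep)).2 hsub
  have hd : (X ^ (e+1) - 1 : (ZMod p)[X]) ∣ f ^ 2 - X := by
    rw [heqprod]
    exact (Multiset.prod_X_sub_C_dvd_iff_le_roots hneff _).2 hle
  -- Step B : quotient is linear
  obtain ⟨A, hA⟩ := hd
  have hAne : A ≠ 0 := by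
    intro h; rw [h, mul_zero] at hA; exact hneff hA
  have hdegA : A.natDegree = 1 := by
    have h1 := natDegree_mul (hmono.ne_zero) hAne
    rw [← hA, hdeg2] at h1
    have h2 : (X ^ (e+1) - 1 : (ZMod p)[X]).natDegree = e + 1 := by
      simpa using natDegree_X_pow_sub_C (n := e+1) (r := (1 : ZMod p))
    rw [h2] at h1
    omega
  set c := A.coeff 1 with hc_def
  set d := A.coeff 0 with hd_def
  have hAeq : A = C c * X + C d := eq_X_add_C_of_natDegree_le_one (le_of_eq hdegA)
  have hE : f ^ 2 = (X ^ (e+1) - 1) * (C c * X + C d) + X := by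
    rw [← hAeq, ← hA]; ring
  -- Step C : derivative identity
  have h0 : ((p : ℕ) : (ZMod p)[X]) = 0 := by
    rw [← C_eq_natCast, ZMod.natCast_self, C_0]
  have hz : ((e : (ZMod p)[X]) * 2 + 3 : (ZMod p)[X]) = 0 := by
    have h1 : ((2 * e + 3 : ℕ) : (ZMod p)[X]) = ((p : ℕ) : (ZMod p)[X]) := by
      rw [hpe]
    rw [h0] at h1
    push_cast at h1
    linear_combination h1
  have hE' := congrArg derivative hE
  simp only [derivative_pow, derivative_add, derivative_sub, derivative_mul,
    derivative_X_pow, derivative_X, derivative_C, derivative_one, map_ofNat,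
    Nat.cast_ofNat, pow_one, mul_one, mul_zero, zero_mul, sub_zero, add_zero,
    zero_add, Nat.add_sub_cancel, Nat.cast_add, Nat.cast_one, map_add, map_one,
    C_eq_natCast] at hE'
  have I1 : f * (4 * X * derivative f - f) =
      -(2 * C d) * X ^ (e+1) + (1 - C c) * X + C d := by
    linear_combination 2 * X * hE' - hE + (X ^ e * (C c * X ^ 2 + C d * X)) * hz
  have I2 : f * (2 * C d * f + (C c * X + C d) * (4 * X * derivative f - f)) =
      C c * (1 - C c) * X ^ 2 + (3 * C d - 2 * C c * C d) * X - (C d) ^ 2 := by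
    linear_combination (2 * C d) * hE + (C c * X + C d) * I1
  -- Step D : the quadratic must vanish
  have hR0 : C c * (1 - C c) * X ^ 2 + (3 * C d - 2 * C c * C d) * X - (C d) ^ 2
      = (0 : (ZMod p)[X]) := by
    by_contra h
    have hdvd : f ∣ C c * (1 - C c) * X ^ 2 + (3 * C d - 2 * C c * C d) * X - (C d) ^ 2 :=
      ⟨_, I2.symm⟩
    have hle2 := natDegree_le_of_dvd hdvd h
    rw [hdeg'] at hle2
    have : (C c * (1 - C c) * X ^ 2 + (3 * C d - 2 * C c * C d) * X
        - (C d) ^ 2 : (ZMod p)[X]).natDegree ≤ 2 := by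
      compute_degree
    omega
  have hq0 : C (c - c*c) * X ^ 2 + C (3*d - 2*c*d) * X + C (-(d*d)) = (0 : (ZMod p)[X]) := by
    simp only [map_sub, map_mul, map_neg, map_ofNat]
    linear_combination hR0
  have hd0 : d = 0 := by
    have h1 := congrArg (fun g => coeff g 0) hq0
    simp only [coeff_add, coeff_C_mul, coeff_X_pow, coeff_X, coeff_C, coeff_zero,
      reduceIte, mul_zero, mul_one, zero_add, add_zero] at h1
    norm_num at h1
    exact h1
  have hc01 : c = 0 ∨ c = 1 := by
    have h1 := congrArg (fun g => coeff g 2) hq0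
    simp only [coeff_add, coeff_C_mul, coeff_X_pow, coeff_X, coeff_C, coeff_zero,
      reduceIte, mul_zero, mul_one, zero_add, add_zero] at h1
    norm_num at h1
    have h2 : c * (1 - c) = 0 := by linear_combination h1
    rcases mul_eq_zero.mp h2 with h | h
    · exact Or.inl h
    · exact Or.inr (sub_eq_zero.mp h).symm
  rcases hc01 with hc0 | hc1
  · exfalso
    rw [hc0, hd0] at hE
    simp at hE
    have := congrArg natDegree hE
    rw [natDegree_pow, hdeg', natDegree_X] at this
    omega
  · rw [hc1, hd0] at hE
    have hE2 : f ^ 2 = (X ^ n) ^ 2 := by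
      have hx2 : ((X : (ZMod p)[X]) ^ n) ^ 2 = X ^ (e+2) := by
        rw [← pow_mul]; congr 1; omega
      rw [hE, hx2, C_1, C_0]; ring
    have hfac : (f - X ^ n) * (f + X ^ n) = 0 := by linear_combination hE2
    have hn' : (p + 1) / 4 = n := by omega
    rw [hn']
    rcases mul_eq_zero.mp hfac with h | h
    · exact Or.inl (sub_eq_zero.mp h)
    · exact Or.inr (eq_neg_of_add_eq_zero_left h)
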